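/- arXiv:1303.5456 — 2 statements merged into one kernel-verified Lean document; each statement's English description precedes it below -/
import Mathlib

section
/- Let G be a finite connected undirected graph and A an Abelian group. Viewing the group H(E, A) of balanced A-valued functions on the edges of G and, for each orientation G_dir of G, the group HR(E(G_dir), A) of rigid-balanced functions, all as subgroups of A^(|E|), one has H(E, A) = ⋂ HR(E(G_dir), A), the intersection over all 2^(|E|) orientations of G. -/
/-- A directed multigraph: edges with a source and a target vertex. -/
structure Dgraph (V : Type) (E : Type) where
  src : E → V
  tgt : E → V

namespace Dgraph

variable {V E : Type}

/-- The symmetrization of a digraph: each edge together with its formal reversal.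
`Sum.inl e` is the edge `e` itself, `Sum.inr e` is its reversal `ē`. -/
def sym (G : Dgraph V E) : Dgraph V (E ⊕ E) where
  src := Sum.elim G.src G.tgt
  tgt := Sum.elim G.tgt G.src

/-- A cycle: a list of pairwise distinct edges, consecutively incident,
and closed (the target of the last edge is the source of the first).
The empty list is the trivial cycle. -/
def IsCycle (G : Dgraph V E) (l : List E) : Prop :=
  l.Nodup ∧ l.Chain' (fun a b => G.tgt a = G.src b) ∧
    ∀ h : l ≠ [], G.tgt (l.getLast h) = G.src (l.head h)

/-- Adjacency in the underlying undirected graph. -/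
def Adj (G : Dgraph V E) (x y : V) : Prop :=
  ∃ e, (G.src e = x ∧ G.tgt e = y) ∨ (G.src e = y ∧ G.tgt e = x)

/-- Weak connectivity: the underlying undirected graph is connected. -/
def WeaklyConnected (G : Dgraph V E) : Prop :=
  ∀ x y : V, Relation.ReflTransGen G.Adj x y

/-- The underlying undirected graph is bipartite. -/
def Bipartite (G : Dgraph V E) : Prop :=
  ∃ c : V → Bool, ∀ e, c (G.src e) ≠ c (G.tgt e)

variable (A : Type) [AddCommGroup A]

/-- A function on the symmetrized edge set taking opposite values on reversed edges. -/
def Antisym (f : E ⊕ E → A) : Prop :=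
  ∀ e : E, f (Sum.inr e) = - f (Sum.inl e)

/-- A function on edges is balanced if its sum along every cycle is zero. -/
def BalancedE (G : Dgraph V E) (f : E → A) : Prop :=
  ∀ l : List E, G.IsCycle l → (l.map f).sum = 0

/-- A pair of a function `g` on vertices and `f` on edges is balanced if the
alternating sum `g v₁ + f e₁ + ⋯ + g vₙ + f eₙ` along every cycle is zero
(the vertices of a cycle are exactly the sources of its edges). -/
def BalancedVE (G : Dgraph V E) (g : V → A) (f : E → A) : Prop :=
  ∀ l : List E, G.IsCycle l → (l.map (fun e => g (G.src e) + f e)).sum = 0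

variable {A}

lemma sum_map_add (l : List E) (f g : E → A) :
    (l.map (fun e => f e + g e)).sum = (l.map f).sum + (l.map g).sum := by
  induction l with
  | nil => simp
  | cons a t ih => simp only [List.map_cons, List.sum_cons, ih]; abel

lemma sum_map_neg (l : List E) (f : E → A) :
    (l.map (fun e => - f e)).sum = - (l.map f).sum := by
  induction l with
  | nil => simp
  | cons a t ih => simp only [List.map_cons, List.sum_cons, ih]; abel

lemma sum_map_eq_zero (l : List E) (f : E → A) (h : ∀ e, f e = 0) :
    (l.map f).sum = 0 := by
  induction l with
  | nil => simp
  | cons a t ih => simp [h, ih]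

variable (A)

/-- `HF(𝔼, A)`: the group of flexible-balanced functions on the symmetrized edges. -/
def HF (G : Dgraph V E) : AddSubgroup ((E ⊕ E) → A) where
  carrier := {f | Antisym A f ∧ BalancedE A G.sym f}
  zero_mem' :=
    ⟨fun e => by simp, fun l _ => sum_map_eq_zero l _ (fun e => by simp)⟩
  add_mem' := by
    intro f g hf hg
    refine ⟨fun e => ?_, fun l hl => ?_⟩
    · have h1 := hf.1 e; have h2 := hg.1 e
      simp only [Pi.add_apply]
      rw [h1, h2]; abel
    · have hmap : l.map (f + g) = l.map (fun e => f e + g e) := rfl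
      rw [hmap, sum_map_add l f g, hf.2 l hl, hg.2 l hl, add_zero]
  neg_mem' := by
    intro f hf
    refine ⟨fun e => ?_, fun l hl => ?_⟩
    · simp only [Pi.neg_apply]; rw [hf.1 e]
    · have hmap : l.map (-f) = l.map (fun e => - f e) := rfl
      rw [hmap, sum_map_neg l f, hf.2 l hl, neg_zero]

/-- `WF(V ∪ 𝔼, A)`: the group of flexible-balanced functions on vertices and edges,
encoded as pairs (function on vertices, function on symmetrized edges). -/
def WF (G : Dgraph V E) : AddSubgroup ((V → A) × ((E ⊕ E) → A)) where
  carrier := {p | Antisym A p.2 ∧ BalancedVE A G.sym p.1 p.2}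
  zero_mem' :=
    ⟨fun e => by simp, fun l _ => sum_map_eq_zero l _ (fun e => by simp)⟩
  add_mem' := by
    intro p q hp hq
    refine ⟨fun e => ?_, fun l hl => ?_⟩
    · have h1 := hp.1 e; have h2 := hq.1 e
      simp only [Prod.snd_add, Pi.add_apply]
      rw [h1, h2]; abel
    · have h := sum_map_add l (fun e => p.1 (G.sym.src e) + p.2 e)
        (fun e => q.1 (G.sym.src e) + q.2 e)
      simp only [Prod.fst_add, Prod.snd_add, Pi.add_apply]
      have heq : (l.map (fun e => (p.1 (G.sym.src e) + q.1 (G.sym.src e)) + (p.2 e + q.2 e))).sum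
          = (l.map (fun e => (p.1 (G.sym.src e) + p.2 e) + (q.1 (G.sym.src e) + q.2 e))).sum := by
        congr 1; apply List.map_congr_left; intro e _; abel
      rw [heq, h, hp.2 l hl, hq.2 l hl, add_zero]
  neg_mem' := by
    intro p hp
    refine ⟨fun e => ?_, fun l hl => ?_⟩
    · simp only [Prod.snd_neg, Pi.neg_apply]; rw [hp.1 e]
    · have h := sum_map_neg l (fun e => p.1 (G.sym.src e) + p.2 e)
      simp only [Prod.fst_neg, Prod.snd_neg, Pi.neg_apply]
      have heq : (l.map (fun e => -p.1 (G.sym.src e) + -p.2 e)).sum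
          = (l.map (fun e => -(p.1 (G.sym.src e) + p.2 e))).sum := by
        congr 1; apply List.map_congr_left; intro e _; abel
      rw [heq, h, hp.2 l hl, neg_zero]

/-- `BF(V, A)`: the group of flexible-balanceable functions on vertices. -/
def BF (G : Dgraph V E) : AddSubgroup (V → A) where
  carrier := {g | ∃ f : (E ⊕ E) → A, (g, f) ∈ WF A G}
  zero_mem' := ⟨0, (WF A G).zero_mem⟩
  add_mem' := by
    rintro g1 g2 ⟨f1, h1⟩ ⟨f2, h2⟩
    exact ⟨f1 + f2, (WF A G).add_mem h1 h2⟩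
  neg_mem' := by
    rintro g ⟨f, h⟩
    exact ⟨-f, (WF A G).neg_mem h⟩

/-- The subgroup of elements of order dividing 2. -/
def Two : AddSubgroup A where
  carrier := {a | a + a = 0}
  zero_mem' := by simp
  add_mem' := by
    intro a b ha hb
    have h : a + b + (a + b) = (a + a) + (b + b) := by abel
    simp only [Set.mem_setOf_eq] at *
    rw [h, ha, hb, add_zero]
  neg_mem' := by
    intro a ha
    simp only [Set.mem_setOf_eq] at *
    rw [← neg_add]; simp [ha]

/-- `HR(E, A)`: the group of rigid-balanced functions on edges. -/
def HR (G : Dgraph V E) : AddSubgroup (E → A) where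
  carrier := {f | BalancedE A G f}
  zero_mem' := fun l _ => sum_map_eq_zero l _ (fun e => by simp)
  add_mem' := by
    intro f g hf hg l hl
    have hmap : l.map (f + g) = l.map (fun e => f e + g e) := rfl
    rw [hmap, sum_map_add l f g, hf l hl, hg l hl, add_zero]
  neg_mem' := by
    intro f hf l hl
    have hmap : l.map (-f) = l.map (fun e => - f e) := rfl
    rw [hmap, sum_map_neg l f, hf l hl, neg_zero]

/-- `WR(V ∪ E, A)`: the group of rigid-balanced functions on vertices and edges,
encoded as pairs (function on vertices, function on edges). -/
def WR (G : Dgraph V E) : AddSubgroup ((V → A) × (E → A)) where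
  carrier := {p | BalancedVE A G p.1 p.2}
  zero_mem' := fun l _ => sum_map_eq_zero l _ (fun e => by simp)
  add_mem' := by
    intro p q hp hq l hl
    have h := sum_map_add l (fun e => p.1 (G.src e) + p.2 e)
      (fun e => q.1 (G.src e) + q.2 e)
    simp only [Prod.fst_add, Prod.snd_add, Pi.add_apply]
    have heq : (l.map (fun e => (p.1 (G.src e) + q.1 (G.src e)) + (p.2 e + q.2 e))).sum
        = (l.map (fun e => (p.1 (G.src e) + p.2 e) + (q.1 (G.src e) + q.2 e))).sum := by
      congr 1; apply List.map_congr_left; intro e _; abel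
    rw [heq, h, hp l hl, hq l hl, add_zero]
  neg_mem' := by
    intro p hp l hl
    have h := sum_map_neg l (fun e => p.1 (G.src e) + p.2 e)
    simp only [Prod.fst_neg, Prod.snd_neg, Pi.neg_apply]
    have heq : (l.map (fun e => -p.1 (G.src e) + -p.2 e)).sum
        = (l.map (fun e => -(p.1 (G.src e) + p.2 e))).sum := by
      congr 1; apply List.map_congr_left; intro e _; abel
    rw [heq, h, hp l hl, neg_zero]

variable {A}

/-- One-step directed reachability. -/
def Step (G : Dgraph V E) (x y : V) : Prop := ∃ e, G.src e = x ∧ G.tgt e = y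

/-- Directed reachability. -/
def Reach (G : Dgraph V E) : V → V → Prop := Relation.ReflTransGen G.Step

/-- Every vertex is reachable from every other vertex by a directed path. -/
def StronglyConnected (G : Dgraph V E) : Prop := ∀ x y : V, G.Reach x y

/-- Mutual directed reachability as an equivalence (setoid) on vertices;
its classes are the strongly connected components. -/
def scSetoid (G : Dgraph V E) : Setoid V where
  r x y := G.Reach x y ∧ G.Reach y x
  iseqv := ⟨fun _ => ⟨.refl, .refl⟩, fun h => ⟨h.2, h.1⟩,
    fun h1 h2 => ⟨h1.1.trans h2.1, h2.2.trans h1.2⟩⟩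

/-- The number `k̄(G)` of strongly connected components. -/
noncomputable def numSCC (G : Dgraph V E) : ℕ := Nat.card (Quotient G.scSetoid)

/-- The number `r(G)` of edges joining vertices in distinct strongly connected components. -/
noncomputable def numCrossEdges (G : Dgraph V E) : ℕ :=
  Nat.card {e : E // ¬ G.scSetoid.r (G.src e) (G.tgt e)}

/-- A directed path from `x` to `y`: pairwise distinct, consecutively incident edges,
starting at `x` and ending at `y`; the empty path joins each vertex to itself. -/
def IsPathFrom (G : Dgraph V E) (l : List E) (x y : V) : Prop :=
  l.Nodup ∧ l.Chain' (fun a b => G.tgt a = G.src b) ∧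
    ((l = [] ∧ x = y) ∨ ∃ h : l ≠ [], G.src (l.head h) = x ∧ G.tgt (l.getLast h) = y)

/-- Reorientation of the edges: edge `e` keeps its direction iff `o e = true`. -/
def orient (G : Dgraph V E) (o : E → Bool) : Dgraph V E where
  src e := if o e then G.src e else G.tgt e
  tgt e := if o e then G.tgt e else G.src e

/-- The underlying edge of a symmetrized edge. -/
def proj : E ⊕ E → E := Sum.elim id id

/-- A cycle in the underlying *undirected* graph: edges may be traversed in either
direction, and the underlying edges are pairwise distinct. -/
def IsUCycle (G : Dgraph V E) (l : List (E ⊕ E)) : Prop :=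
  (l.map proj).Nodup ∧ l.Chain' (fun a b => G.sym.tgt a = G.sym.src b) ∧
    ∀ h : l ≠ [], G.sym.tgt (l.getLast h) = G.sym.src (l.head h)

variable (A)

/-- A function on the edges of an undirected graph is balanced if its sum along
every undirected cycle (each edge contributing its value regardless of the
traversal direction) is zero. -/
def UBalanced (G : Dgraph V E) (f : E → A) : Prop :=
  ∀ l : List (E ⊕ E), G.IsUCycle l → (l.map (fun ee => f (proj ee))).sum = 0

/-- The subgroup of functions on vertices vanishing at a chosen base vertex. -/
def vanishing (v₀ : V) : AddSubgroup (V → A) where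
  carrier := {g | g v₀ = 0}
  zero_mem' := by simp
  add_mem' := by
    intro a b ha hb
    simp only [Set.mem_setOf_eq, Pi.add_apply] at *
    rw [ha, hb, add_zero]
  neg_mem' := by
    intro a ha
    simp only [Set.mem_setOf_eq, Pi.neg_apply] at *
    rw [ha, neg_zero]

variable {A}

/-- The subgraph induced by a strongly connected component `j`. -/
def compGraph (G : Dgraph V E) (j : Quotient G.scSetoid) :
    Dgraph {v : V // Quotient.mk G.scSetoid v = j}
      {e : E // Quotient.mk G.scSetoid (G.src e) = j ∧ Quotient.mk G.scSetoid (G.tgt e) = j} where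
  src e := ⟨G.src e.1, e.2.1⟩
  tgt e := ⟨G.tgt e.1, e.2.2⟩

end Dgraph


private lemma chain'_of_mem {α : Type*} {R S : α → α → Prop} {l : List α}
    (h : ∀ a ∈ l, ∀ b ∈ l, R a b → S a b) (hl : l.Chain' R) : l.Chain' S := by
  unfold List.Chain' at *
  rw [List.isChain_iff_getElem] at *
  intro i hi
  exact h _ (List.getElem_mem _) _ (List.getElem_mem _) (hl i hi)

/-- For a finite connected undirected graph `G`, a function on the edges
is balanced (its sum along every undirected cycle vanishes) if and only if it is
rigid-balanced for every orientation of `G`; i.e. `H(E, A) = ⋂ HR(E(G_dir), A)`, the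
intersection over all `2^(|E|)` orientations. -/
theorem stmt13 (V E : Type) [Fintype V] [Fintype E] (A : Type) [AddCommGroup A]
    (G : Dgraph V E) (hG : G.WeaklyConnected) (f : E → A) :
    Dgraph.UBalanced A G f ↔ ∀ o : E → Bool, Dgraph.BalancedE A (G.orient o) f := by
  classical
  constructor
  · -- balanced → each orientation rigid-balanced
    intro hf o l hl
    set emb : E → E ⊕ E := fun e => if o e then Sum.inl e else Sum.inr e with hemb
    have hsrc : ∀ e, G.sym.src (emb e) = (G.orient o).src e := by
      intro e; by_cases h : o e <;> simp [hemb, h, Dgraph.sym, Dgraph.orient]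
    have htgt : ∀ e, G.sym.tgt (emb e) = (G.orient o).tgt e := by
      intro e; by_cases h : o e <;> simp [hemb, h, Dgraph.sym, Dgraph.orient]
    have hproj : ∀ e, Dgraph.proj (emb e) = e := by
      intro e; by_cases h : o e <;> simp [hemb, h, Dgraph.proj]
    obtain ⟨hnd, hch, hcl⟩ := hl
    have hcyc : G.IsUCycle (l.map emb) := by
      refine ⟨?_, ?_, ?_⟩
      · have : (l.map emb).map Dgraph.proj = l := by
          rw [List.map_map]
          have : Dgraph.proj ∘ emb = id := funext hproj
          rw [this, List.map_id]
        rw [this]; exact hnd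
      · unfold List.Chain' at hch ⊢; rw [List.isChain_map]
        exact hch.imp (fun {a b} h => by rw [htgt, hsrc]; exact h)
      · intro h
        have hne : l ≠ [] := by
          intro h'; rw [h'] at h; exact h rfl
        rw [List.getLast_map, List.head_map, htgt, hsrc]
        exact hcl hne
    have := hf (l.map emb) hcyc
    rwa [List.map_map, show (fun ee => f (Dgraph.proj ee)) ∘ emb = f from
      funext fun e => by rw [Function.comp_apply, hproj]] at this
  · -- all orientations rigid-balanced → balanced
    intro hf l hl
    obtain ⟨hnd, hch, hcl⟩ := hl
    letI : DecidableEq (E ⊕ E) := Classical.decEq _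
    set o : E → Bool := fun e => @ite Bool (Sum.inr e ∈ l) (Classical.propDecidable _) false true with ho
    have key : ∀ ee ∈ l, (G.orient o).src (Dgraph.proj ee) = G.sym.src ee ∧
        (G.orient o).tgt (Dgraph.proj ee) = G.sym.tgt ee := by
      intro ee hee
      cases ee with
      | inl e =>
        have : Sum.inr e ∉ l := by
          intro hmem
          have := List.inj_on_of_nodup_map hnd hee hmem rfl
          simp at this
        have hoe : o e = true := by simp [ho, this]
        constructor <;> simp [Dgraph.orient, Dgraph.proj, Dgraph.sym, hoe]
      | inr e =>
        have hoe : o e = false := by simp [ho]; exact hee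
        constructor <;> simp [Dgraph.orient, Dgraph.proj, Dgraph.sym, hoe]
    have hcyc : (G.orient o).IsCycle (l.map Dgraph.proj) := by
      refine ⟨hnd, ?_, ?_⟩
      · unfold List.Chain' at hch ⊢; rw [List.isChain_map]
        refine chain'_of_mem (fun a ha b hb h => ?_) hch
        rw [(key a ha).2, (key b hb).1]; exact h
      · intro h
        have hne : l ≠ [] := by
          intro h'; rw [h'] at h; exact h rfl
        rw [List.getLast_map, List.head_map,
          (key _ (List.getLast_mem hne)).2, (key _ (List.head_mem hne)).1]
        exact hcl hne
    have := hf o (l.map Dgraph.proj) hcyc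
    rwa [List.map_map] at this
end

section
/- Let G = (V, E) be a directed graph whose strongly connected components have vertex sets V₁, ..., V_t with internal edge sets E₁, ..., E_t, and let U be the set of edges between distinct components. Then HR(E, A) is isomorphic to HR(E₁, A) × ... × HR(E_t, A) × A^U. -/
namespace Dgraph

variable {V E : Type} {A : Type} [AddCommGroup A]

lemma chain_reach (G : Dgraph V E) : ∀ (l : List E) (h : l ≠ []),
    l.Chain' (fun a b => G.tgt a = G.src b) →
    G.Reach (G.src (l.head h)) (G.tgt (l.getLast h))
  | [], h, _ => absurd rfl h
  | [e], _, _ => Relation.ReflTransGen.single ⟨e, rfl, rfl⟩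
  | e :: e' :: t, _, hc => by
    have h1 : G.tgt e = G.src e' := (List.isChain_cons_cons.mp hc).1
    have h2 := chain_reach G (e' :: t) (by simp) (List.isChain_cons_cons.mp hc).2
    have h3 : G.Reach (G.src e) (G.tgt e) := Relation.ReflTransGen.single ⟨e, rfl, rfl⟩
    rw [List.getLast_cons (by simp)]
    simp only [List.head_cons] at *
    exact h3.trans (h1 ▸ h2)

end Dgraph

namespace Dgraph

variable {V E : Type} {A : Type} [AddCommGroup A]

lemma cycle_mem_r (G : Dgraph V E) {l : List E} (hc : G.IsCycle l) (hne : l ≠ [])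
    {e : E} (he : e ∈ l) :
    G.scSetoid.r (G.src e) (G.src (l.head hne)) ∧
    G.scSetoid.r (G.tgt e) (G.src (l.head hne)) := by
  obtain ⟨l₁, l₂, rfl⟩ := List.append_of_mem he
  obtain ⟨-, hchain, hclose⟩ := hc
  have hclose := hclose hne
  have hstep : G.Reach (G.src e) (G.tgt e) := Relation.ReflTransGen.single ⟨e, rfl, rfl⟩
  rw [List.Chain', List.isChain_append] at hchain
  obtain ⟨hch1, hch2, hbd⟩ := hchain
  have hA : G.Reach (G.src ((l₁ ++ e :: l₂).head hne)) (G.src e) := by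
    rcases eq_or_ne l₁ [] with rfl | h1
    · simp only [List.nil_append, List.head_cons]
      exact Relation.ReflTransGen.refl
    · have hb : G.tgt (l₁.getLast h1) = G.src e := by
        apply hbd
        · rw [List.getLast?_eq_getLast h1]; rfl
        · simp
      have := chain_reach G l₁ h1 hch1
      rw [List.head_append_of_ne_nil h1, hb] at *
      exact this
  have hB : G.Reach (G.tgt e) (G.src ((l₁ ++ e :: l₂).head hne)) := by
    rcases eq_or_ne l₂ [] with rfl | h2
    · rw [← hclose]
      have hg : (l₁ ++ e :: ([] : List E)).getLast hne = e := by
        simp [List.getLast_append]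
      rw [hg]
      exact Relation.ReflTransGen.refl
    · have hb : G.tgt e = G.src (l₂.head h2) := by
        apply (List.isChain_cons.mp hch2).1
        exact List.head?_eq_head h2
      have hr2 := chain_reach G l₂ h2 (List.isChain_cons.mp hch2).2
      have hg : (l₁ ++ e :: l₂).getLast hne = l₂.getLast h2 := by
        rw [List.getLast_append_of_ne_nil (h₂ := by simp)]
        exact List.getLast_cons h2
      rw [hg] at hclose
      rw [hb, ← hclose]
      exact hr2
  exact ⟨⟨hstep.trans hB, hA⟩, ⟨hB, hA.trans hstep⟩⟩

end Dgraph

namespace Dgraph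

variable {V E : Type} {A : Type} [AddCommGroup A]

lemma pmap_eq_map' {α β : Type _} {p : α → Prop} (f : ∀ a, p a → β) (g : α → β)
    (h : ∀ a (pa : p a), f a pa = g a) :
    ∀ (l : List α) (H : ∀ a ∈ l, p a), l.pmap f H = l.map g
  | [], _ => rfl
  | a :: t, H => by
    simp only [List.pmap, List.map, h]
    rw [pmap_eq_map' f g h t]

lemma isCycle_map_val (G : Dgraph V E) (j : Quotient G.scSetoid)
    {l : List {e : E // Quotient.mk G.scSetoid (G.src e) = j ∧
        Quotient.mk G.scSetoid (G.tgt e) = j}}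
    (hc : (G.compGraph j).IsCycle l) : G.IsCycle (l.map Subtype.val) := by
  refine ⟨hc.1.map Subtype.val_injective, ?_, ?_⟩
  · exact (List.isChain_map _).mpr (hc.2.1.imp fun _ _ h => congrArg Subtype.val h)
  · intro h
    have h' : l ≠ [] := fun hl => h (by simp [hl])
    rw [List.getLast_map, List.head_map]
    exact congrArg Subtype.val (hc.2.2 h')

lemma restrict_mem (G : Dgraph V E) (f : E → A) (hf : BalancedE A G f)
    (j : Quotient G.scSetoid) :
    BalancedE A (G.compGraph j) (fun e => f e.1) := by
  intro l hl
  have := hf _ (isCycle_map_val G j hl)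
  rwa [List.map_map] at this

/-- Glue component functions and cross-edge values into one function on edges. -/
noncomputable def glue (G : Dgraph V E)
    (c : ∀ j : Quotient G.scSetoid, HR A (G.compGraph j))
    (u : {e : E // ¬ G.scSetoid.r (G.src e) (G.tgt e)} → A) : E → A := fun e =>
  @dite _ (Quotient.mk G.scSetoid (G.src e) = Quotient.mk G.scSetoid (G.tgt e))
    (Classical.dec _)
    (fun h => (c (Quotient.mk G.scSetoid (G.src e))).1 ⟨e, rfl, h.symm⟩)
    (fun h => u ⟨e, fun hr => h (Quotient.sound hr)⟩)

lemma glue_eq (G : Dgraph V E)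
    (c : ∀ j : Quotient G.scSetoid, HR A (G.compGraph j))
    (u : {e : E // ¬ G.scSetoid.r (G.src e) (G.tgt e)} → A)
    (j : Quotient G.scSetoid) (e : E)
    (h1 : Quotient.mk G.scSetoid (G.src e) = j)
    (h2 : Quotient.mk G.scSetoid (G.tgt e) = j) :
    glue G c u e = (c j).1 ⟨e, h1, h2⟩ := by
  subst h1
  unfold glue
  rw [dif_pos h2.symm]

lemma glue_eq_u (G : Dgraph V E)
    (c : ∀ j : Quotient G.scSetoid, HR A (G.compGraph j))
    (u : {e : E // ¬ G.scSetoid.r (G.src e) (G.tgt e)} → A)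
    (e : E) (h : ¬ G.scSetoid.r (G.src e) (G.tgt e)) :
    glue G c u e = u ⟨e, h⟩ := by
  unfold glue
  rw [dif_neg (fun hq => h (Quotient.exact hq))]

lemma glue_mem (G : Dgraph V E)
    (c : ∀ j : Quotient G.scSetoid, HR A (G.compGraph j))
    (u : {e : E // ¬ G.scSetoid.r (G.src e) (G.tgt e)} → A) :
    BalancedE A G (glue G c u) := by
  intro l hl
  rcases eq_or_ne l [] with rfl | hne
  · simp
  set j := Quotient.mk G.scSetoid (G.src (l.head hne)) with hj
  have hmem : ∀ e ∈ l, Quotient.mk G.scSetoid (G.src e) = j ∧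
      Quotient.mk G.scSetoid (G.tgt e) = j := by
    intro e he
    have := cycle_mem_r G hl hne he
    exact ⟨Quotient.sound this.1, Quotient.sound this.2⟩
  set l' := l.pmap (fun e he => (⟨e, hmem e he⟩ :
    {e : E // Quotient.mk G.scSetoid (G.src e) = j ∧
        Quotient.mk G.scSetoid (G.tgt e) = j})) (fun _ h => h) with hl'
  have hval : l'.map Subtype.val = l := by
    rw [hl', List.map_pmap]
    exact (pmap_eq_map' _ id (fun a pa => rfl) l _).trans (List.map_id l)
  have hne' : l' ≠ [] := fun h => hne (by rw [← hval, h]; rfl)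
  have hcyc : (G.compGraph j).IsCycle l' := by
    refine ⟨?_, ?_, ?_⟩
    · exact List.Nodup.of_map Subtype.val (hval ▸ hl.1)
    · have := hl.2.1
      rw [← hval, List.Chain', List.isChain_map] at this
      exact this.imp fun _ _ h => Subtype.ext h
    · intro h
      apply Subtype.ext
      have h5 : l.getLast? = some ((l'.getLast h).1) := by
        rw [← hval, List.getLast?_map, List.getLast?_eq_getLast h]
        rfl
      have h6 : l.head? = some ((l'.head h).1) := by
        rw [← hval, List.head?_map, List.head?_eq_head h]
        rfl
      have e1 : (l'.getLast h).1 = l.getLast hne :=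
        Option.some.inj (h5.symm.trans (List.getLast?_eq_getLast hne))
      have e2 : (l'.head h).1 = l.head hne :=
        Option.some.inj (h6.symm.trans (List.head?_eq_head hne))
      show G.tgt (l'.getLast h).1 = G.src (l'.head h).1
      rw [e1, e2]
      exact hl.2.2 hne
  have hsum := (c j).2 l' hcyc
  have : l'.map (c j).1 = l.map (glue G c u) := by
    rw [hl', List.map_pmap]
    exact pmap_eq_map' _ _
      (fun e pe => (glue_eq G c u j e (hmem e pe).1 (hmem e pe).2).symm) l _
  rwa [this] at hsum

end Dgraph



/-- For a finite directed graph `G` with strongly connected components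
indexed by `Quotient G.scSetoid`, with internal edge sets carried by the component
subgraphs and `U` the set of edges between distinct components, `HR(E, A)` is isomorphic
to the product of the groups `HR(Eⱼ, A)` times `A^U`. -/
theorem stmt16 (V E : Type) [Fintype V] [Fintype E] (A : Type) [AddCommGroup A]
    (G : Dgraph V E) :
    Nonempty (Dgraph.HR A G ≃+
      ((∀ j : Quotient G.scSetoid, Dgraph.HR A (G.compGraph j)) ×
       ({e : E // ¬ G.scSetoid.r (G.src e) (G.tgt e)} → A))) := by
  classical
  refine ⟨{
    toFun := fun f => (fun j => ⟨fun e => f.1 e.1, Dgraph.restrict_mem G f.1 f.2 j⟩,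
                       fun e => f.1 e.1),
    invFun := fun p => ⟨Dgraph.glue G p.1 p.2, Dgraph.glue_mem G p.1 p.2⟩,
    left_inv := ?_, right_inv := ?_, map_add' := ?_ }⟩
  · intro f
    ext e
    show Dgraph.glue G _ _ e = f.1 e
    unfold Dgraph.glue
    split <;> rfl
  · intro p
    refine Prod.ext ?_ ?_
    · funext j
      apply Subtype.ext
      funext e'
      show Dgraph.glue G p.1 p.2 e'.1 = (p.1 j).1 e'
      rw [Dgraph.glue_eq G p.1 p.2 j e'.1 e'.2.1 e'.2.2]
    · funext e
      show Dgraph.glue G p.1 p.2 e.1 = p.2 e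
      rw [Dgraph.glue_eq_u G p.1 p.2 e.1 e.2]
  · intro f g
    rfl
end
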